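/- Let R = K[x]/(xⁿ) where K is a field whose characteristic divides n, let I ∈ R be an element with invertible derivative I', and J ∈ R arbitrary. Define K-linear maps u, v: R → R by u(f) = f'·(I')⁻¹ + Jf and v(f) = If. Then uv - vu = id (the identity map on R). -/

import Mathlib

open Polynomial

/-- Let `R = K[x]/(xⁿ)` with `char K = p` dividing `n`, let `I ∈ K[x]` have derivative
invertible in `R`, and `J ∈ K[x]`. Then the `K`-linear maps `u, v : R → R` given by
`u(f) = f'·(I')⁻¹ + Jf` and `v(f) = If` are well defined and satisfy `uv - vu = id`. -/
theorem truncated_weyl_rep (K : Type) [Field K] (p n : ℕ) [CharP K p]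
    (hn : 0 < n) (hpn : p ∣ n) (I J : K[X])
    (hI : IsUnit (Ideal.Quotient.mk (Ideal.span {(X : K[X]) ^ n}) (derivative I))) :
    ∃ u v : (K[X] ⧸ Ideal.span {(X : K[X]) ^ n}) →ₗ[K]
        (K[X] ⧸ Ideal.span {(X : K[X]) ^ n}),
      (∀ f : K[X], u (Ideal.Quotient.mk (Ideal.span {(X : K[X]) ^ n}) f) =
          Ideal.Quotient.mk (Ideal.span {(X : K[X]) ^ n}) (derivative f) *
              ((hI.unit⁻¹ : (K[X] ⧸ Ideal.span {(X : K[X]) ^ n})ˣ) :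
                K[X] ⧸ Ideal.span {(X : K[X]) ^ n}) +
            Ideal.Quotient.mk (Ideal.span {(X : K[X]) ^ n}) J *
              Ideal.Quotient.mk (Ideal.span {(X : K[X]) ^ n}) f) ∧
      (∀ f : K[X], v (Ideal.Quotient.mk (Ideal.span {(X : K[X]) ^ n}) f) =
          Ideal.Quotient.mk (Ideal.span {(X : K[X]) ^ n}) (I * f)) ∧
      u ∘ₗ v - v ∘ₗ u = LinearMap.id := by
  set Id : Ideal K[X] := Ideal.span {(X : K[X]) ^ n} with hId
  set mk := Ideal.Quotient.mk Id with hmk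
  have hnK : (n : K) = 0 := by
    obtain ⟨k, rfl⟩ := hpn
    simp [Nat.cast_mul, CharP.cast_eq_zero K p]
  -- derivative descends
  have hker : Id.restrictScalars K ≤ LinearMap.ker
      ((Ideal.Quotient.mkₐ K Id).toLinearMap ∘ₗ
        (derivative : K[X] →ₗ[K] K[X])) := by
    intro f hf
    have hf' : f ∈ Id := hf
    rw [hId, Ideal.mem_span_singleton] at hf'
    obtain ⟨g, rfl⟩ := hf'
    have hd : derivative ((X : K[X]) ^ n * g) = X ^ n * derivative g := by
      rw [derivative_mul, derivative_X_pow]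
      simp [hnK]
    simp only [LinearMap.mem_ker, LinearMap.comp_apply, hd]
    have : (X : K[X]) ^ n * derivative g ∈ Id := by
      rw [hId, Ideal.mem_span_singleton]
      exact ⟨derivative g, rfl⟩
    show Ideal.Quotient.mk Id (X ^ n * derivative g) = 0
    exact (Ideal.Quotient.eq_zero_iff_mem).mpr this
  let D : (K[X] ⧸ Id) →ₗ[K] (K[X] ⧸ Id) :=
    ((Id.restrictScalars K).liftQ _ hker) ∘ₗ
      (Submodule.Quotient.restrictScalarsEquiv K Id).symm.toLinearMap
  have hD : ∀ f : K[X], D (mk f) = mk (derivative f) := by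
    intro f
    show ((Id.restrictScalars K).liftQ _ hker)
        ((Submodule.Quotient.restrictScalarsEquiv K Id).symm (Submodule.Quotient.mk f))
      = mk (derivative f)
    rw [Submodule.Quotient.restrictScalarsEquiv_symm_mk, Submodule.liftQ_apply]
    rfl
  set c : K[X] ⧸ Id := ((hI.unit⁻¹ : (K[X] ⧸ Id)ˣ) : K[X] ⧸ Id) with hc
  refine ⟨(LinearMap.mulRight K c) ∘ₗ D + LinearMap.mulLeft K (mk J),
    LinearMap.mulLeft K (mk I), ?_, ?_, ?_⟩
  · intro f
    simp [hD, LinearMap.mulRight_apply, LinearMap.mulLeft_apply]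
    exact congrArg (· * c + mk J * mk f) (hD f)
  · intro f
    simp [LinearMap.mulLeft_apply]
    rfl
  · have hcI : mk (derivative I) * c = 1 := by
      rw [hc, mul_comm]
      exact hI.val_inv_mul
    set_option maxHeartbeats 1000000 in
    apply LinearMap.ext
    intro g
    obtain ⟨f, rfl⟩ := Ideal.Quotient.mk_surjective g
    have hm : (Ideal.Quotient.mk (Ideal.span {(X : K[X]) ^ n})) f = mk f := rfl
    simp only [LinearMap.sub_apply, LinearMap.comp_apply, LinearMap.add_apply,
      LinearMap.mulLeft_apply, LinearMap.mulRight_apply, LinearMap.id_apply, hm]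
    rw [← map_mul, hD, hD, derivative_mul, map_add, map_mul, map_mul]
    calc (mk (derivative I) * mk f + mk I * mk (derivative f)) * c + mk J * (mk I * mk f) -
        mk I * (mk (derivative f) * c + mk J * mk f)
        = (mk (derivative I) * c) * mk f := by ring
      _ = mk f := by rw [hcI, one_mul]
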